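/- Let μ > 0. Then for every x ∈ [0, π/2], the derivative of the solution ω₁ satisfies ω₁'(x,μ) = −μ·(μ·a₂' + a₂)·sin(μx) + (μ·a₁' + a₁)·cos(μx) − ∫₀ˣ q(θ)·cos(μ(x − θ))·ω₁(θ − Δ(θ), μ) dθ. -/

import Mathlib

open Real Set

theorem stmt2
    (a₁ a₁' a₂ a₂' b δ : ℝ) (hδ : δ ≠ 0) (ha₂' : a₂' ≠ 0)
    (q Δ : ℝ → ℝ)
    (hq1 : ContinuousOn q (Ico 0 (π/2))) (hq2 : ContinuousOn q (Ioc (π/2) π))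
    (hqlim1 : ∃ L : ℝ, Filter.Tendsto q (nhdsWithin (π/2) (Iio (π/2))) (nhds L))
    (hqlim2 : ∃ L : ℝ, Filter.Tendsto q (nhdsWithin (π/2) (Ioi (π/2))) (nhds L))
    (hΔ1 : ContinuousOn Δ (Ico 0 (π/2))) (hΔ2 : ContinuousOn Δ (Ioc (π/2) π))
    (hΔlim1 : ∃ L : ℝ, Filter.Tendsto Δ (nhdsWithin (π/2) (Iio (π/2))) (nhds L))
    (hΔlim2 : ∃ L : ℝ, Filter.Tendsto Δ (nhdsWithin (π/2) (Ioi (π/2))) (nhds L))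
    (hΔ0 : ∀ x, 0 ≤ Δ x)
    (hret1 : ∀ x ∈ Ico 0 (π/2), 0 ≤ x - Δ x)
    (hret2 : ∀ x ∈ Ioc (π/2) π, π/2 ≤ x - Δ x)
    (μ : ℝ) (hμ : 0 < μ)
    (ω₁ ω₁d ω₁dd : ℝ → ℝ)
    (hder1 : ∀ x ∈ Icc 0 (π/2), HasDerivWithinAt ω₁ (ω₁d x) (Icc 0 (π/2)) x)
    (hder2 : ∀ x ∈ Icc 0 (π/2), HasDerivWithinAt ω₁d (ω₁dd x) (Icc 0 (π/2)) x)
    (hcont : ContinuousOn ω₁dd (Icc 0 (π/2)))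
    (hode : ∀ x ∈ Icc 0 (π/2), ω₁dd x + q x * ω₁ (x - Δ x) = -μ^2 * ω₁ x)
    (hinit : ω₁ 0 = μ * a₂' + a₂)
    (hinit' : ω₁d 0 = μ * a₁' + a₁) :
    ∀ x ∈ Icc 0 (π/2),
      ω₁d x = -μ * (μ * a₂' + a₂) * Real.sin (μ * x)
        + (μ * a₁' + a₁) * Real.cos (μ * x)
        - ∫ θ in (0:ℝ)..x, q θ * Real.cos (μ * (x - θ)) * ω₁ (θ - Δ θ) := by
  intro x hx
  obtain ⟨hx0, hx2⟩ := hx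
  have hω₁c : ContinuousOn ω₁ (Icc 0 (π/2)) :=
    fun t ht => (hder1 t ht).continuousWithinAt
  have hω₁dc : ContinuousOn ω₁d (Icc 0 (π/2)) :=
    fun t ht => (hder2 t ht).continuousWithinAt
  set f : ℝ → ℝ := fun θ => Real.cos (μ*(x-θ)) * ω₁d θ - μ * Real.sin (μ*(x-θ)) * ω₁ θ with hf
  set f' : ℝ → ℝ := fun θ => Real.cos (μ*(x-θ)) * (ω₁dd θ + μ^2 * ω₁ θ) with hf'
  have hsub : Icc 0 x ⊆ Icc 0 (π/2) := Icc_subset_Icc le_rfl hx2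
  have hcos : ∀ θ : ℝ, HasDerivAt (fun t => Real.cos (μ*(x-t))) (μ * Real.sin (μ*(x-θ))) θ := by
    intro θ
    have h1 : HasDerivAt (fun t : ℝ => μ*(x-t)) (-μ) θ := by
      simpa using ((hasDerivAt_id θ).const_sub x).const_mul μ
    have := (Real.hasDerivAt_cos (μ*(x-θ))).comp θ h1
    simpa [mul_comm, Function.comp_def] using this
  have hsin : ∀ θ : ℝ, HasDerivAt (fun t => Real.sin (μ*(x-t))) (-μ * Real.cos (μ*(x-θ))) θ := by
    intro θ
    have h1 : HasDerivAt (fun t : ℝ => μ*(x-t)) (-μ) θ := by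
      simpa using ((hasDerivAt_id θ).const_sub x).const_mul μ
    have := (Real.hasDerivAt_sin (μ*(x-θ))).comp θ h1
    simpa [mul_comm, Function.comp_def] using this
  have hderiv : ∀ θ ∈ Ioo 0 x, HasDerivWithinAt f (f' θ) (Ioi θ) θ := by
    intro θ hθ
    have hθmem : θ ∈ Icc (0:ℝ) (π/2) := hsub (Ioo_subset_Icc_self hθ)
    have hnhds : Icc (0:ℝ) (π/2) ∈ nhds θ := by
      apply Icc_mem_nhds hθ.1 (lt_of_lt_of_le hθ.2 hx2)
    have h1 : HasDerivAt ω₁ (ω₁d θ) θ := (hder1 θ hθmem).hasDerivAt hnhds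
    have h2 : HasDerivAt ω₁d (ω₁dd θ) θ := (hder2 θ hθmem).hasDerivAt hnhds
    have := ((hcos θ).mul h2).sub ((((hsin θ).const_mul μ).mul h1))
    have h3 : HasDerivAt f (f' θ) θ := by
      convert this using 1
      show Real.cos (μ*(x-θ)) * (ω₁dd θ + μ^2 * ω₁ θ) = _
      ring
      all_goals rfl
    exact h3.hasDerivWithinAt
  have hfc : ContinuousOn f (Icc 0 x) := by
    apply ContinuousOn.sub
    · exact ((Real.continuous_cos.comp (continuous_const.mul (continuous_const.sub continuous_id))).continuousOn).mul (hω₁dc.mono hsub)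
    · exact ((continuous_const.mul (Real.continuous_sin.comp (continuous_const.mul (continuous_const.sub continuous_id)))).continuousOn).mul (hω₁c.mono hsub)
  have hf'c : ContinuousOn f' (Icc 0 x) := by
    apply ContinuousOn.mul
    · exact (Real.continuous_cos.comp (continuous_const.mul (continuous_const.sub continuous_id))).continuousOn
    · exact ((hcont.mono hsub).add (((hω₁c.mono hsub)).const_smul (μ^2)))
  have hint : IntervalIntegrable f' MeasureTheory.volume 0 x := by
    apply ContinuousOn.intervalIntegrable
    rwa [uIcc_of_le hx0]
  have key : ∫ θ in (0:ℝ)..x, f' θ = f x - f 0 :=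
    intervalIntegral.integral_eq_sub_of_hasDeriv_right_of_le hx0 hfc hderiv hint
  have heq : ∫ θ in (0:ℝ)..x, f' θ
      = -∫ θ in (0:ℝ)..x, q θ * Real.cos (μ * (x - θ)) * ω₁ (θ - Δ θ) := by
    rw [← intervalIntegral.integral_neg]
    apply intervalIntegral.integral_congr
    intro θ hθ
    rw [uIcc_of_le hx0] at hθ
    have hode' := hode θ (hsub hθ)
    simp only [hf']
    have h4 : ω₁dd θ + μ^2 * ω₁ θ = -(q θ * ω₁ (θ - Δ θ)) := by linarith
    rw [h4]; ring
  have hfx : f x = ω₁d x := by simp [hf]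
  have hf0 : f 0 = Real.cos (μ*x) * (μ * a₁' + a₁) - μ * Real.sin (μ*x) * (μ * a₂' + a₂) := by
    simp [hf, hinit, hinit']
  rw [heq, hfx, hf0] at key
  linarith [key]
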